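/- (Key algebraic computation in the proof of Theorem 2.19) Let S be a 4-dimensional linear subspace of ℝ⁷, let π denote the orthogonal projection of ℝ⁷ onto S^⊥, and let π^T = id − π. Fix U, V ∈ S. Define N(X;Y,Z,T) = (⟨U,Y⟩⟨V,Z⟩ − ⟨U,Z⟩⟨V,Y⟩)⟨χ(U,V,πX), T⟩ + (⟨U,Z⟩⟨V,T⟩ − ⟨U,T⟩⟨V,Z⟩)⟨χ(U,V,πX), Y⟩ + (⟨U,T⟩⟨V,Y⟩ − ⟨U,Y⟩⟨V,T⟩)⟨χ(U,V,πX), Z⟩, and the quadrilinear map D(X,Y,Z,T) = N(X;Y,Z,T) − N(Y;X,Z,T) + N(Z;X,Y,T) − N(T;X,Y,Z). Then for every orthonormal basis {g₁,g₂,g₃,g₄} of S: (1/12) Σ_{m,n,p=1}^7 D( π(χ(e_m,e_n,e_p)) − π^T(χ(e_m,e_n,e_p)), e_m, e_n, e_p ) = Σ_{a=1}^4 ‖π(χ(U,V,g_a))‖². -/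

import Mathlib

open scoped RealInnerProductSpace

noncomputable section

abbrev E7 : Type := EuclideanSpace ℝ (Fin 7)

/-- The standard orthonormal basis vectors of ℝ⁷. -/
def e7 (i : Fin 7) : E7 := EuclideanSpace.single i 1

/-- Kronecker delta. -/
def kd7 (i j : Fin 7) : ℝ := if i = j then 1 else 0

/-- `e^{abc}(e_i, e_j, e_k)` : component of a wedge of three dual basis covectors. -/
def trip7 (a b c i j k : Fin 7) : ℝ :=
  Matrix.det !![kd7 a i, kd7 a j, kd7 a k;
                kd7 b i, kd7 b j, kd7 b k;
                kd7 c i, kd7 c j, kd7 c k]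

/-- `e^{abcd}(e_i, e_j, e_k, e_l)` : component of a wedge of four dual basis covectors. -/
def quad7 (a b c d i j k l : Fin 7) : ℝ :=
  Matrix.det !![kd7 a i, kd7 a j, kd7 a k, kd7 a l;
                kd7 b i, kd7 b j, kd7 b k, kd7 b l;
                kd7 c i, kd7 c j, kd7 c k, kd7 c l;
                kd7 d i, kd7 d j, kd7 d k, kd7 d l]

/-- Components `φ_{ijk}` of the standard G₂ 3-form
`φ = e¹²³ + e¹⁴⁵ − e¹⁶⁷ + e²⁴⁶ − e²⁷⁵ + e³⁴⁷ − e³⁵⁶` (indices shifted to be 0-based). -/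
def phiC (i j k : Fin 7) : ℝ :=
  trip7 0 1 2 i j k + trip7 0 3 4 i j k - trip7 0 5 6 i j k
  + trip7 1 3 5 i j k - trip7 1 6 4 i j k + trip7 2 3 6 i j k - trip7 2 4 5 i j k

/-- Components `ψ_{ijkl}` of the Hodge dual 4-form
`ψ = e⁴⁵⁶⁷ − e²³⁴⁵ + e²³⁶⁷ − e³¹⁴⁶ + e³¹⁷⁵ − e¹²⁴⁷ + e¹²⁵⁶` (0-based). -/
def psiC (i j k l : Fin 7) : ℝ :=
  quad7 3 4 5 6 i j k l - quad7 1 2 3 4 i j k l + quad7 1 2 5 6 i j k l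
  - quad7 2 0 3 5 i j k l + quad7 2 0 6 4 i j k l
  - quad7 0 1 3 6 i j k l + quad7 0 1 4 5 i j k l

/-- The standard G₂ 3-form evaluated on arbitrary vectors. -/
def phi7 (x y z : E7) : ℝ := ∑ i, ∑ j, ∑ k, x i * y j * z k * phiC i j k

/-- The 4-form ψ evaluated on arbitrary vectors. -/
def psi7 (x y z w : E7) : ℝ :=
  ∑ i, ∑ j, ∑ k, ∑ l, x i * y j * z k * w l * psiC i j k l

/-- The cross product on ℝ⁷, characterized by `⟨x × y, z⟩ = φ(x,y,z)`. -/
def cross7 (x y : E7) : E7 := (WithLp.equiv 2 (Fin 7 → ℝ)).symm fun k => phi7 x y (e7 k)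

/-- The vector-valued 3-form χ, characterized by `⟨χ(x,y,z), w⟩ = ψ(x,y,z,w)`. -/
def chi7 (x y z : E7) : E7 := (WithLp.equiv 2 (Fin 7 → ℝ)).symm fun l => psi7 x y z (e7 l)

/-- Orthogonal projection `π` of ℝ⁷ onto `Sᗮ`. -/
def projPerp (S : Submodule ℝ E7) (x : E7) : E7 := (Sᗮ.orthogonalProjectionOnto x : E7)

/-- Tangential projection `π^T = id − π`. -/
def projTan (S : Submodule ℝ E7) (x : E7) : E7 := x - projPerp S x

/-- The map `N(X; Y,Z,T)` built from `U, V` and the projection `pr = π`. -/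
def Nform (U V : E7) (pr : E7 → E7) (X Y Z T : E7) : ℝ :=
  (⟪U, Y⟫ * ⟪V, Z⟫ - ⟪U, Z⟫ * ⟪V, Y⟫) * ⟪chi7 U V (pr X), T⟫
  + (⟪U, Z⟫ * ⟪V, T⟫ - ⟪U, T⟫ * ⟪V, Z⟫) * ⟪chi7 U V (pr X), Y⟫
  + (⟪U, T⟫ * ⟪V, Y⟫ - ⟪U, Y⟫ * ⟪V, T⟫) * ⟪chi7 U V (pr X), Z⟫

/-- The quadrilinear map `D(X,Y,Z,T) = N(X;Y,Z,T) − N(Y;X,Z,T) + N(Z;X,Y,T) − N(T;X,Y,Z)`. -/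
def Dform (U V : E7) (pr : E7 → E7) (X Y Z T : E7) : ℝ :=
  Nform U V pr X Y Z T - Nform U V pr Y X Z T
  + Nform U V pr Z X Y T - Nform U V pr T X Y Z


/-! ### Auxiliary machinery -/

section Aux

/-! #### Permutation machinery for `psiC` -/

lemma quad7_eq (a b c d : Fin 7) (v : Fin 4 → Fin 7) :
    quad7 a b c d (v 0) (v 1) (v 2) (v 3)
      = Matrix.det (Matrix.of fun r s => kd7 (![a,b,c,d] r) (v s)) := by
  unfold quad7; congr 1; ext r s; fin_cases r <;> fin_cases s <;> rfl

lemma quad7_swap (σ : Equiv.Perm (Fin 4)) (a b c d : Fin 7) (v : Fin 4 → Fin 7) :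
    quad7 a b c d (v (σ 0)) (v (σ 1)) (v (σ 2)) (v (σ 3))
      = (Equiv.Perm.sign σ : ℤ) * quad7 a b c d (v 0) (v 1) (v 2) (v 3) := by
  rw [show quad7 a b c d (v (σ 0)) (v (σ 1)) (v (σ 2)) (v (σ 3))
      = quad7 a b c d ((v ∘ σ) 0) ((v ∘ σ) 1) ((v ∘ σ) 2) ((v ∘ σ) 3) from rfl,
    quad7_eq a b c d (v ∘ σ), quad7_eq a b c d v]
  have : (Matrix.of fun r s => kd7 (![a,b,c,d] r) ((v ∘ σ) s))
      = (Matrix.of fun r s => kd7 (![a,b,c,d] r) (v s)).submatrix id σ := by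
    ext r s; rfl
  rw [this, Matrix.det_permute']

lemma psiC_swap (σ : Equiv.Perm (Fin 4)) (v : Fin 4 → Fin 7) :
    psiC (v (σ 0)) (v (σ 1)) (v (σ 2)) (v (σ 3))
      = (Equiv.Perm.sign σ : ℤ) * psiC (v 0) (v 1) (v 2) (v 3) := by
  unfold psiC
  rw [quad7_swap σ 3 4 5 6 v, quad7_swap σ 1 2 3 4 v, quad7_swap σ 1 2 5 6 v,
    quad7_swap σ 2 0 3 5 v, quad7_swap σ 2 0 6 4 v, quad7_swap σ 0 1 3 6 v,
    quad7_swap σ 0 1 4 5 v]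
  ring

def perm4 (f g : Fin 4 → Fin 4) (h1 : Function.LeftInverse g f)
    (h2 : Function.RightInverse g f) : Equiv.Perm (Fin 4) := ⟨f, g, h1, h2⟩


lemma qs1 (m n p q : Fin 7) : psiC n m p q = -psiC m n p q := by
  have h := psiC_swap (perm4 ![1,0,2,3] ![1,0,2,3] (by decide) (by decide)) ![m,n,p,q]
  have hs : ((Equiv.Perm.sign (perm4 ![1,0,2,3] ![1,0,2,3] (by decide) (by decide))) : ℤ) = -1 := by decide
  rw [hs] at h
  simpa [perm4] using h

lemma qs2 (m n p q : Fin 7) : psiC n p m q = psiC m n p q := by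
  have h := psiC_swap (perm4 ![1,2,0,3] ![2,0,1,3] (by decide) (by decide)) ![m,n,p,q]
  have hs : ((Equiv.Perm.sign (perm4 ![1,2,0,3] ![2,0,1,3] (by decide) (by decide))) : ℤ) = 1 := by decide
  rw [hs] at h
  simpa [perm4] using h

lemma qs4 (m n p q : Fin 7) : psiC m p n q = -psiC m n p q := by
  have h := psiC_swap (perm4 ![0,2,1,3] ![0,2,1,3] (by decide) (by decide)) ![m,n,p,q]
  have hs : ((Equiv.Perm.sign (perm4 ![0,2,1,3] ![0,2,1,3] (by decide) (by decide))) : ℤ) = -1 := by decide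
  rw [hs] at h
  simpa [perm4] using h

lemma qs5 (m n p q : Fin 7) : psiC p n m q = -psiC m n p q := by
  have h := psiC_swap (perm4 ![2,1,0,3] ![2,1,0,3] (by decide) (by decide)) ![m,n,p,q]
  have hs : ((Equiv.Perm.sign (perm4 ![2,1,0,3] ![2,1,0,3] (by decide) (by decide))) : ℤ) = -1 := by decide
  rw [hs] at h
  simpa [perm4] using h

lemma qs6 (m n p q : Fin 7) : psiC p m n q = psiC m n p q := by
  have h := psiC_swap (perm4 ![2,0,1,3] ![1,2,0,3] (by decide) (by decide)) ![m,n,p,q]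
  have hs : ((Equiv.Perm.sign (perm4 ![2,0,1,3] ![1,2,0,3] (by decide) (by decide))) : ℤ) = 1 := by decide
  rw [hs] at h
  simpa [perm4] using h

lemma qs7 (m n p l : Fin 7) : psiC n l p m = psiC m n p l := by
  have h := psiC_swap (perm4 ![1,3,2,0] ![3,0,2,1] (by decide) (by decide)) ![m,n,p,l]
  have hs : ((Equiv.Perm.sign (perm4 ![1,3,2,0] ![3,0,2,1] (by decide) (by decide))) : ℤ) = 1 := by decide
  rw [hs] at h
  simpa [perm4] using h

lemma qs8 (m n p l : Fin 7) : psiC l n p m = -psiC m n p l := by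
  have h := psiC_swap (perm4 ![3,1,2,0] ![3,1,2,0] (by decide) (by decide)) ![m,n,p,l]
  have hs : ((Equiv.Perm.sign (perm4 ![3,1,2,0] ![3,1,2,0] (by decide) (by decide))) : ℤ) = -1 := by decide
  rw [hs] at h
  simpa [perm4] using h

lemma qs9 (m n p l : Fin 7) : psiC m l n p = psiC m n p l := by
  have h := psiC_swap (perm4 ![0,3,1,2] ![0,2,3,1] (by decide) (by decide)) ![m,n,p,l]
  have hs : ((Equiv.Perm.sign (perm4 ![0,3,1,2] ![0,2,3,1] (by decide) (by decide))) : ℤ) = 1 := by decide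
  rw [hs] at h
  simpa [perm4] using h

lemma qs10 (m n p l : Fin 7) : psiC l m n p = -psiC m n p l := by
  have h := psiC_swap (perm4 ![3,0,1,2] ![1,2,3,0] (by decide) (by decide)) ![m,n,p,l]
  have hs : ((Equiv.Perm.sign (perm4 ![3,0,1,2] ![1,2,3,0] (by decide) (by decide))) : ℤ) = -1 := by decide
  rw [hs] at h
  simpa [perm4] using h

lemma qs11 (m n p l : Fin 7) : psiC p l m n = psiC m n p l := by
  have h := psiC_swap (perm4 ![2,3,0,1] ![2,3,0,1] (by decide) (by decide)) ![m,n,p,l]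
  have hs : ((Equiv.Perm.sign (perm4 ![2,3,0,1] ![2,3,0,1] (by decide) (by decide))) : ℤ) = 1 := by decide
  rw [hs] at h
  simpa [perm4] using h

lemma qs12 (m n p l : Fin 7) : psiC l p m n = -psiC m n p l := by
  have h := psiC_swap (perm4 ![3,2,0,1] ![2,3,1,0] (by decide) (by decide)) ![m,n,p,l]
  have hs : ((Equiv.Perm.sign (perm4 ![3,2,0,1] ![2,3,1,0] (by decide) (by decide))) : ℤ) = -1 := by decide
  rw [hs] at h
  simpa [perm4] using h

lemma qs3 (m n p q : Fin 7) : psiC m n q p = -psiC m n p q := by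
  have h := psiC_swap (perm4 ![0,1,3,2] ![0,1,3,2] (by decide) (by decide)) ![m,n,p,q]
  have hs : ((Equiv.Perm.sign (perm4 ![0,1,3,2] ![0,1,3,2] (by decide) (by decide))) : ℤ) = -1 := by decide
  rw [hs] at h
  simpa [perm4] using h


/-! #### Sum shuffling helpers -/

lemma sum2c {f g : Fin 7 → Fin 7 → ℝ} (h : ∀ a b, f a b = g a b) :
    (∑ a, ∑ b, f a b) = ∑ a, ∑ b, g a b :=
  Finset.sum_congr rfl fun a _ => Finset.sum_congr rfl fun b _ => h a b

lemma sum3c {f g : Fin 7 → Fin 7 → Fin 7 → ℝ} (h : ∀ a b c, f a b c = g a b c) :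
    (∑ a, ∑ b, ∑ c, f a b c) = ∑ a, ∑ b, ∑ c, g a b c :=
  Finset.sum_congr rfl fun a _ => Finset.sum_congr rfl fun b _ =>
    Finset.sum_congr rfl fun c _ => h a b c

lemma sum4c {f g : Fin 7 → Fin 7 → Fin 7 → Fin 7 → ℝ} (h : ∀ a b c d, f a b c d = g a b c d) :
    (∑ a, ∑ b, ∑ c, ∑ d, f a b c d) = ∑ a, ∑ b, ∑ c, ∑ d, g a b c d :=
  Finset.sum_congr rfl fun a _ => Finset.sum_congr rfl fun b _ =>
    Finset.sum_congr rfl fun c _ => Finset.sum_congr rfl fun d _ => h a b c d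

lemma sc2 {ι κ : Type*} [Fintype ι] [Fintype κ] (f : ι → κ → ℝ) :
    (∑ a, ∑ b, f a b) = ∑ b, ∑ a, f a b :=
  Finset.sum_comm

lemma sc3a {ι κ μ : Type*} [Fintype ι] [Fintype κ] [Fintype μ] (f : ι → κ → μ → ℝ) :
    (∑ a, ∑ b, ∑ c, f a b c) = ∑ c, ∑ a, ∑ b, f a b c := by
  calc (∑ a, ∑ b, ∑ c, f a b c) = ∑ a, ∑ c, ∑ b, f a b c :=
        Finset.sum_congr rfl fun a _ => Finset.sum_comm
    _ = ∑ c, ∑ a, ∑ b, f a b c := Finset.sum_comm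

lemma sc3b {ι κ μ : Type*} [Fintype ι] [Fintype κ] [Fintype μ] (f : ι → κ → μ → ℝ) :
    (∑ a, ∑ b, ∑ c, f a b c) = ∑ b, ∑ c, ∑ a, f a b c := by
  calc (∑ a, ∑ b, ∑ c, f a b c) = ∑ b, ∑ a, ∑ c, f a b c := Finset.sum_comm
    _ = ∑ b, ∑ c, ∑ a, f a b c := Finset.sum_congr rfl fun b _ => Finset.sum_comm

lemma sc3c {ι κ μ : Type*} [Fintype ι] [Fintype κ] [Fintype μ] (f : ι → κ → μ → ℝ) :
    (∑ a, ∑ b, ∑ c, f a b c) = ∑ c, ∑ b, ∑ a, f a b c := by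
  calc (∑ a, ∑ b, ∑ c, f a b c) = ∑ c, ∑ a, ∑ b, f a b c := sc3a f
    _ = ∑ c, ∑ b, ∑ a, f a b c := Finset.sum_congr rfl fun c _ => Finset.sum_comm

lemma R1 {ι κ μ ν : Type*} [Fintype ι] [Fintype κ] [Fintype μ] [Fintype ν]
    (f : ι → κ → μ → ν → ℝ) :
    (∑ a, ∑ b, ∑ c, ∑ d, f a b c d) = ∑ c, ∑ d, ∑ a, ∑ b, f a b c d := by
  calc (∑ a, ∑ b, ∑ c, ∑ d, f a b c d) = ∑ a, ∑ c, ∑ d, ∑ b, f a b c d :=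
        Finset.sum_congr rfl fun a _ => sc3b _
    _ = ∑ c, ∑ d, ∑ a, ∑ b, f a b c d := sc3b _

lemma R2 {ι κ μ ν : Type*} [Fintype ι] [Fintype κ] [Fintype μ] [Fintype ν]
    (f : ι → κ → μ → ν → ℝ) :
    (∑ a, ∑ b, ∑ c, ∑ d, f a b c d) = ∑ a, ∑ d, ∑ b, ∑ c, f a b c d :=
  Finset.sum_congr rfl fun a _ => sc3a _

lemma R3 {ι κ μ ν : Type*} [Fintype ι] [Fintype κ] [Fintype μ] [Fintype ν]
    (f : ι → κ → μ → ν → ℝ) :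
    (∑ a, ∑ b, ∑ c, ∑ d, f a b c d) = ∑ b, ∑ d, ∑ a, ∑ c, f a b c d := by
  calc (∑ a, ∑ b, ∑ c, ∑ d, f a b c d) = ∑ a, ∑ b, ∑ d, ∑ c, f a b c d :=
        Finset.sum_congr rfl fun a _ => Finset.sum_congr rfl fun b _ => Finset.sum_comm
    _ = ∑ b, ∑ d, ∑ a, ∑ c, f a b c d := sc3b _

lemma R4 {ι κ μ ν : Type*} [Fintype ι] [Fintype κ] [Fintype μ] [Fintype ν]
    (f : ι → κ → μ → ν → ℝ) :
    (∑ a, ∑ b, ∑ c, ∑ d, f a b c d) = ∑ a, ∑ c, ∑ b, ∑ d, f a b c d :=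
  Finset.sum_congr rfl fun a _ => Finset.sum_comm

lemma R6 {ι κ μ ν : Type*} [Fintype ι] [Fintype κ] [Fintype μ] [Fintype ν]
    (f : ι → κ → μ → ν → ℝ) :
    (∑ a, ∑ b, ∑ c, ∑ d, f a b c d) = ∑ b, ∑ c, ∑ a, ∑ d, f a b c d :=
  sc3b _

lemma R7 {ι κ μ ν : Type*} [Fintype ι] [Fintype κ] [Fintype μ] [Fintype ν]
    (f : ι → κ → μ → ν → ℝ) :
    (∑ a, ∑ b, ∑ c, ∑ d, f a b c d) = ∑ d, ∑ b, ∑ a, ∑ c, f a b c d := by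
  calc (∑ a, ∑ b, ∑ c, ∑ d, f a b c d) = ∑ a, ∑ b, ∑ d, ∑ c, f a b c d :=
        Finset.sum_congr rfl fun a _ => Finset.sum_congr rfl fun b _ => Finset.sum_comm
    _ = ∑ d, ∑ a, ∑ b, ∑ c, f a b c d := sc3a _
    _ = ∑ d, ∑ b, ∑ a, ∑ c, f a b c d := Finset.sum_congr rfl fun d _ => Finset.sum_comm

lemma mul_sum2 (c : ℝ) (f : Fin 7 → Fin 7 → ℝ) :
    c * (∑ a, ∑ b, f a b) = ∑ a, ∑ b, c * f a b := by
  rw [Finset.mul_sum]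
  exact Finset.sum_congr rfl fun a _ => Finset.mul_sum _ _ _

lemma sum2_mul (f : Fin 7 → Fin 7 → ℝ) (c : ℝ) :
    (∑ a, ∑ b, f a b) * c = ∑ a, ∑ b, f a b * c := by
  rw [Finset.sum_mul]
  exact Finset.sum_congr rfl fun a _ => Finset.sum_mul _ _ _

lemma sum2_sub (f g : Fin 7 → Fin 7 → ℝ) :
    (∑ a, ∑ b, (f a b - g a b)) = (∑ a, ∑ b, f a b) - ∑ a, ∑ b, g a b := by
  rw [← Finset.sum_sub_distrib]
  exact Finset.sum_congr rfl fun a _ => Finset.sum_sub_distrib _ _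

lemma sum3_add (f g : Fin 7 → Fin 7 → Fin 7 → ℝ) :
    (∑ a, ∑ b, ∑ c, (f a b c + g a b c))
      = (∑ a, ∑ b, ∑ c, f a b c) + ∑ a, ∑ b, ∑ c, g a b c := by
  simp [Finset.sum_add_distrib]

lemma sum3_sub (f g : Fin 7 → Fin 7 → Fin 7 → ℝ) :
    (∑ a, ∑ b, ∑ c, (f a b c - g a b c))
      = (∑ a, ∑ b, ∑ c, f a b c) - ∑ a, ∑ b, ∑ c, g a b c := by
  simp [Finset.sum_sub_distrib]

lemma lin2 (c d : ℝ) (f g : Fin 7 → ℝ) :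
    (-(∑ l, f l)) * c - d * (-(∑ l, g l)) = ∑ l, (d * g l - f l * c) := by
  rw [Finset.sum_sub_distrib, ← Finset.mul_sum, ← Finset.sum_mul]; ring

lemma lin2' (c d : ℝ) (f g : Fin 7 → ℝ) :
    c * (-(∑ l, g l)) - (-(∑ l, f l)) * d = ∑ l, (f l * d - c * g l) := by
  rw [Finset.sum_sub_distrib, ← Finset.mul_sum, ← Finset.sum_mul]; ring

/-! #### The matrix `Cc` of the map `x ↦ χ(U,V,x)` and contraction lemmas -/

def Cc (U V : E7) (a b : Fin 7) : ℝ := ∑ i, ∑ j, U i * V j * psiC i j a b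

lemma Cc_anti (U V : E7) (a b : Fin 7) : Cc U V a b = -Cc U V b a := by
  unfold Cc
  calc (∑ i, ∑ j, U i * V j * psiC i j a b)
      = ∑ i, ∑ j, -(U i * V j * psiC i j b a) := sum2c fun i j => by rw [qs3 i j b a]; ring
    _ = -∑ i, ∑ j, U i * V j * psiC i j b a := by simp [Finset.sum_neg_distrib]

lemma con1 (U V : E7) (p q : Fin 7) :
    (∑ m, ∑ n, (U m * V n - U n * V m) * psiC m n p q) = 2 * Cc U V p q := by
  have h1 : (∑ m, ∑ n, U m * V n * psiC m n p q) = Cc U V p q := rfl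
  have h2 : (∑ m, ∑ n, U n * V m * psiC m n p q) = -Cc U V p q := by
    rw [sc2]
    calc (∑ n, ∑ m, U n * V m * psiC m n p q)
        = ∑ n, ∑ m, -(U n * V m * psiC n m p q) := sum2c fun n m => by rw [qs1 n m p q]; ring
      _ = -∑ n, ∑ m, U n * V m * psiC n m p q := by simp [Finset.sum_neg_distrib]
      _ = -Cc U V p q := rfl
  calc (∑ m, ∑ n, (U m * V n - U n * V m) * psiC m n p q)
      = ∑ m, ∑ n, (U m * V n * psiC m n p q - U n * V m * psiC m n p q) :=
        sum2c fun m n => by ring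
    _ = 2 * Cc U V p q := by rw [sum2_sub, h1, h2]; ring

lemma con2 (U V : E7) (m q : Fin 7) :
    (∑ n, ∑ p, (U n * V p - U p * V n) * psiC m n p q) = 2 * Cc U V m q := by
  have h1 : (∑ n, ∑ p, U n * V p * psiC m n p q) = Cc U V m q := by
    calc (∑ n, ∑ p, U n * V p * psiC m n p q)
        = ∑ n, ∑ p, U n * V p * psiC n p m q := sum2c fun n p => by rw [qs2 m n p q]
      _ = Cc U V m q := rfl
  have h2 : (∑ n, ∑ p, U p * V n * psiC m n p q) = -Cc U V m q := by
    rw [sc2]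
    calc (∑ p, ∑ n, U p * V n * psiC m n p q)
        = ∑ p, ∑ n, -(U p * V n * psiC p n m q) := sum2c fun p n => by rw [qs5 m n p q]; ring
      _ = -∑ p, ∑ n, U p * V n * psiC p n m q := by simp [Finset.sum_neg_distrib]
      _ = -Cc U V m q := rfl
  calc (∑ n, ∑ p, (U n * V p - U p * V n) * psiC m n p q)
      = ∑ n, ∑ p, (U n * V p * psiC m n p q - U p * V n * psiC m n p q) :=
        sum2c fun n p => by ring
    _ = 2 * Cc U V m q := by rw [sum2_sub, h1, h2]; ring

lemma con3 (U V : E7) (n q : Fin 7) :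
    (∑ m, ∑ p, (U m * V p - U p * V m) * psiC m n p q) = -(2 * Cc U V n q) := by
  have h1 : (∑ m, ∑ p, U m * V p * psiC m n p q) = -Cc U V n q := by
    calc (∑ m, ∑ p, U m * V p * psiC m n p q)
        = ∑ m, ∑ p, -(U m * V p * psiC m p n q) := sum2c fun m p => by rw [qs4 m n p q]; ring
      _ = -∑ m, ∑ p, U m * V p * psiC m p n q := by simp [Finset.sum_neg_distrib]
      _ = -Cc U V n q := rfl
  have h2 : (∑ m, ∑ p, U p * V m * psiC m n p q) = Cc U V n q := by
    rw [sc2]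
    calc (∑ p, ∑ m, U p * V m * psiC m n p q)
        = ∑ p, ∑ m, U p * V m * psiC p m n q := sum2c fun p m => by rw [qs6 m n p q]
      _ = Cc U V n q := rfl
  calc (∑ m, ∑ p, (U m * V p - U p * V m) * psiC m n p q)
      = ∑ m, ∑ p, (U m * V p * psiC m n p q - U p * V m * psiC m n p q) :=
        sum2c fun m p => by ring
    _ = -(2 * Cc U V n q) := by rw [sum2_sub, h1, h2]; ring

lemma c78 (U V : E7) (m p : Fin 7) :
    (∑ n, ∑ l, (U n * (V l * psiC m n p l) - U l * psiC m n p l * V n)) = 2 * Cc U V p m := by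
  have h1 : (∑ n, ∑ l, U n * (V l * psiC m n p l)) = Cc U V p m := by
    calc (∑ n, ∑ l, U n * (V l * psiC m n p l))
        = ∑ n, ∑ l, U n * V l * psiC n l p m := sum2c fun n l => by rw [qs7 m n p l]; ring
      _ = Cc U V p m := rfl
  have h2 : (∑ n, ∑ l, U l * psiC m n p l * V n) = -Cc U V p m := by
    rw [sc2]
    calc (∑ l, ∑ n, U l * psiC m n p l * V n)
        = ∑ l, ∑ n, -(U l * V n * psiC l n p m) := sum2c fun l n => by rw [qs8 m n p l]; ring
      _ = -∑ l, ∑ n, U l * V n * psiC l n p m := by simp [Finset.sum_neg_distrib]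
      _ = -Cc U V p m := rfl
  rw [sum2_sub, h1, h2]; ring

lemma c910 (U V : E7) (n p : Fin 7) :
    (∑ m, ∑ l, (U m * (V l * psiC m n p l) - U l * psiC m n p l * V m)) = 2 * Cc U V n p := by
  have h1 : (∑ m, ∑ l, U m * (V l * psiC m n p l)) = Cc U V n p := by
    calc (∑ m, ∑ l, U m * (V l * psiC m n p l))
        = ∑ m, ∑ l, U m * V l * psiC m l n p := sum2c fun m l => by rw [qs9 m n p l]; ring
      _ = Cc U V n p := rfl
  have h2 : (∑ m, ∑ l, U l * psiC m n p l * V m) = -Cc U V n p := by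
    rw [sc2]
    calc (∑ l, ∑ m, U l * psiC m n p l * V m)
        = ∑ l, ∑ m, -(U l * V m * psiC l m n p) := sum2c fun l m => by rw [qs10 m n p l]; ring
      _ = -∑ l, ∑ m, U l * V m * psiC l m n p := by simp [Finset.sum_neg_distrib]
      _ = -Cc U V n p := rfl
  rw [sum2_sub, h1, h2]; ring

lemma c1112 (U V : E7) (m n : Fin 7) :
    (∑ p, ∑ l, (U l * psiC m n p l * V p - U p * (V l * psiC m n p l))) = -(2 * Cc U V m n) := by
  have h1 : (∑ p, ∑ l, U l * psiC m n p l * V p) = -Cc U V m n := by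
    rw [sc2]
    calc (∑ l, ∑ p, U l * psiC m n p l * V p)
        = ∑ l, ∑ p, -(U l * V p * psiC l p m n) := sum2c fun l p => by rw [qs12 m n p l]; ring
      _ = -∑ l, ∑ p, U l * V p * psiC l p m n := by simp [Finset.sum_neg_distrib]
      _ = -Cc U V m n := rfl
  have h2 : (∑ p, ∑ l, U p * (V l * psiC m n p l)) = Cc U V m n := by
    calc (∑ p, ∑ l, U p * (V l * psiC m n p l))
        = ∑ p, ∑ l, U p * V l * psiC p l m n := sum2c fun p l => by rw [qs11 m n p l]; ring
      _ = Cc U V m n := rfl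
  rw [sum2_sub, h1, h2]; ring

/-! #### Components, inner products, projections -/

lemma inner7 (x y : E7) : ⟪x, y⟫ = ∑ i, x i * y i := by
  simp [PiLp.inner_apply, RCLike.inner_apply, conj_trivial]
  exact Finset.sum_congr rfl fun _ _ => mul_comm _ _

lemma comp_inner (w : E7) (i : Fin 7) : ⟪e7 i, w⟫ = w i := by
  simp [e7, EuclideanSpace.inner_single_left]

lemma inner_e7r (w : E7) (i : Fin 7) : ⟪w, e7 i⟫ = w i := by
  rw [real_inner_comm]; exact comp_inner w i

lemma sumE7 (x : E7) : ∑ i, x i • e7 i = x := by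
  have h := (EuclideanSpace.basisFun (Fin 7) ℝ).sum_repr' x
  simpa [e7, EuclideanSpace.basisFun_apply, EuclideanSpace.inner_single_left] using h

lemma sum_apply7 {ι : Type*} [Fintype ι] (w : ι → E7) (i : Fin 7) :
    (∑ j, w j) i = ∑ j, w j i :=
  by rw [WithLp.ofLp_sum, Finset.sum_apply]

lemma smul_apply7 (c : ℝ) (w : E7) (i : Fin 7) : (c • w) i = c * w i := rfl

lemma chi7_apply (x y z : E7) (l : Fin 7) :
    chi7 x y z l = ∑ i, ∑ j, ∑ k, x i * y j * z k * psiC i j k l := by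
  show psi7 x y z (e7 l) = _
  unfold psi7
  refine Finset.sum_congr rfl fun i _ => Finset.sum_congr rfl fun j _ =>
    Finset.sum_congr rfl fun k _ => ?_
  simp [e7, EuclideanSpace.single_apply, mul_ite]

lemma chi7_basis (m n p q : Fin 7) : chi7 (e7 m) (e7 n) (e7 p) q = psiC m n p q := by
  rw [chi7_apply]
  simp [e7, EuclideanSpace.single_apply, ite_mul, zero_mul, one_mul, mul_ite, mul_zero, mul_one]

lemma chi_vec (U V x : E7) (t : Fin 7) : chi7 U V x t = ∑ k, x k * Cc U V k t := by
  rw [chi7_apply]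
  rw [sc3a (fun i j k => U i * V j * x k * psiC i j k t)]
  refine Finset.sum_congr rfl fun k _ => ?_
  show _ = x k * ∑ i, ∑ j, U i * V j * psiC i j k t
  rw [mul_sum2]
  exact sum2c fun i j => by ring

def pmat (S : Submodule ℝ E7) (i j : Fin 7) : ℝ := projPerp S (e7 j) i

lemma pm_apply (S : Submodule ℝ E7) (x : E7) (i : Fin 7) :
    projPerp S x i = ∑ j, x j * pmat S i j := by
  have h : projPerp S x = ∑ j, x j • projPerp S (e7 j) := by
    conv_lhs => rw [← sumE7 x]
    show (Sᗮ.subtype.comp (Sᗮ.orthogonalProjectionOnto).toLinearMap) (∑ j, x j • e7 j)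
      = ∑ j, x j • projPerp S (e7 j)
    rw [map_sum]
    exact Finset.sum_congr rfl fun j _ => map_smul _ _ _
  rw [h, sum_apply7]
  exact Finset.sum_congr rfl fun j _ => smul_apply7 _ _ _

lemma projPerp_proj (S : Submodule ℝ E7) (x : E7) :
    projPerp S (projPerp S x) = projPerp S x := by
  unfold projPerp
  congr 1
  exact Submodule.orthogonalProjectionOnto_mem_subspace_eq_self (Sᗮ.orthogonalProjectionOnto x)

lemma projPerp_sub (S : Submodule ℝ E7) (x y : E7) :
    projPerp S (x - y) = projPerp S x - projPerp S y := by
  unfold projPerp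
  rw [map_sub]
  rfl

lemma pm_symm (S : Submodule ℝ E7) (i j : Fin 7) : pmat S i j = pmat S j i := by
  unfold pmat
  rw [← comp_inner (projPerp S (e7 j)) i, ← comp_inner (projPerp S (e7 i)) j]
  unfold projPerp
  rw [real_inner_comm, ← Submodule.starProjection_apply, ← Submodule.starProjection_apply,
    Submodule.inner_starProjection_left_eq_right]

lemma pm_idem (S : Submodule ℝ E7) (q r : Fin 7) :
    (∑ l, pmat S l r * pmat S q l) = pmat S q r := by
  have h := pm_apply S (projPerp S (e7 r)) q
  rw [projPerp_proj] at h
  exact h.symm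

lemma pm_contract (S : Submodule ℝ E7) (q r : Fin 7) :
    (∑ l, pmat S l q * pmat S l r) = pmat S q r := by
  rw [← pm_idem S q r]
  exact Finset.sum_congr rfl fun l _ => by rw [pm_symm S l q]; ring

lemma projPerp_zero_of_mem (S : Submodule ℝ E7) {u : E7} (hu : u ∈ S) : projPerp S u = 0 := by
  unfold projPerp
  rw [Submodule.orthogonalProjectionOnto_orthogonal_apply_eq_zero hu]
  rfl

lemma inner_projPerp_zero (S : Submodule ℝ E7) {u : E7} (hu : u ∈ S) (w : E7) :
    ⟪u, projPerp S w⟫ = 0 := by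
  unfold projPerp
  rw [← Submodule.starProjection_apply, ← Submodule.inner_starProjection_left_eq_right]
  show ⟪projPerp S u, w⟫ = 0
  rw [projPerp_zero_of_mem S hu, inner_zero_left]

lemma projS_eq_sum (S : Submodule ℝ E7) (g : Fin 4 → E7) (hg : Orthonormal ℝ g)
    (hgS : ∀ a, g a ∈ S) (hspan : Submodule.span ℝ (Set.range g) = S) (x : E7) :
    (S.orthogonalProjectionOnto x : E7) = ∑ a, ⟪g a, x⟫ • g a := by
  set g' : Fin 4 → S := fun a => ⟨g a, hgS a⟩ with hg'def
  have hg' : Orthonormal ℝ g' := by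
    constructor
    · intro a
      have := hg.1 a
      rwa [show ‖g' a‖ = ‖g a‖ from rfl]
    · intro a b hab
      have := hg.2 hab
      rwa [show (inner ℝ (g' a) (g' b) : ℝ) = ⟪g a, g b⟫ from rfl]
  have hsp : ⊤ ≤ Submodule.span ℝ (Set.range g') := by
    have hmap : Submodule.map S.subtype (Submodule.span ℝ (Set.range g'))
        = Submodule.map S.subtype ⊤ := by
      rw [Submodule.map_span, Submodule.map_top, Submodule.range_subtype]
      rw [← Set.range_comp]
      exact hspan
    exact le_of_eq (Submodule.map_injective_of_injective S.injective_subtype hmap).symm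
  set b := OrthonormalBasis.mk hg' hsp with hbdef
  have h := b.orthogonalProjectionOnto_apply_eq_sum x
  rw [h]
  push_cast
  refine Finset.sum_congr rfl fun a _ => ?_
  rw [hbdef, OrthonormalBasis.coe_mk]

lemma gram7 (S : Submodule ℝ E7) (g : Fin 4 → E7) (hg : Orthonormal ℝ g)
    (hgS : ∀ a, g a ∈ S) (hspan : Submodule.span ℝ (Set.range g) = S) (k j : Fin 7) :
    (∑ a, g a j * g a k) = kd7 k j - pmat S k j := by
  have hdecomp : (S.orthogonalProjectionOnto (e7 j) : E7) + (Sᗮ.orthogonalProjectionOnto (e7 j) : E7)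
      = e7 j := Submodule.starProjection_add_starProjection_orthogonal (K := S) (e7 j)
  have h1 : (S.orthogonalProjectionOnto (e7 j) : E7) k = kd7 k j - pmat S k j := by
    have := congrArg (fun w : E7 => w k) hdecomp
    simp only at this
    have he : (e7 j) k = kd7 k j := by
      simp [e7, EuclideanSpace.single_apply, kd7]
    have hadd : ((S.orthogonalProjectionOnto (e7 j) : E7) + (Sᗮ.orthogonalProjectionOnto (e7 j) : E7)) k
        = (S.orthogonalProjectionOnto (e7 j) : E7) k + (Sᗮ.orthogonalProjectionOnto (e7 j) : E7) k := rfl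
    rw [hadd] at this
    have : (S.orthogonalProjectionOnto (e7 j) : E7) k + pmat S k j = kd7 k j := by
      rw [← he]; exact this
    linarith [this]
  rw [projS_eq_sum S g hg hgS hspan (e7 j)] at h1
  rw [sum_apply7] at h1
  rw [← h1]
  refine Finset.sum_congr rfl fun a _ => ?_
  rw [smul_apply7, inner_e7r]

/-! #### The contracted tensors -/

def Jm (S : Submodule ℝ E7) (U V : E7) (q t : Fin 7) : ℝ := ∑ k, pmat S k q * Cc U V k t

def Lm (S : Submodule ℝ E7) (U V : E7) (a b : Fin 7) : ℝ := ∑ t, Jm S U V a t * pmat S t b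

def Y1 (S : Submodule ℝ E7) (U V : E7) : ℝ := ∑ a, ∑ b, Cc U V a b * Jm S U V b a

def Y3 (S : Submodule ℝ E7) (U V : E7) : ℝ := ∑ a, ∑ b, Cc U V a b * Lm S U V a b

lemma Y2_eq (S : Submodule ℝ E7) (U V : E7) :
    (∑ a, ∑ b, Cc U V a b * Jm S U V a b) = -Y1 S U V := by
  have expand : ∀ a b : Fin 7, Cc U V a b * Jm S U V a b
      = ∑ k, Cc U V a b * (pmat S k a * Cc U V k b) := fun a b => by
    rw [show Jm S U V a b = ∑ k, pmat S k a * Cc U V k b from rfl, Finset.mul_sum]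
  rw [sum2c expand]
  have expand2 : Y1 S U V = ∑ a, ∑ b, ∑ k, Cc U V a b * (pmat S k b * Cc U V k a) := by
    unfold Y1
    exact sum2c fun a b => by
      rw [show Jm S U V b a = ∑ k, pmat S k b * Cc U V k a from rfl, Finset.mul_sum]
  rw [expand2]
  rw [show (∑ a, ∑ b, ∑ k, Cc U V a b * (pmat S k a * Cc U V k b))
      = ∑ b, ∑ a, ∑ k, Cc U V a b * (pmat S k a * Cc U V k b) from Finset.sum_comm]
  rw [← Finset.sum_neg_distrib]
  refine Finset.sum_congr rfl fun b _ => ?_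
  rw [← Finset.sum_neg_distrib]
  refine Finset.sum_congr rfl fun a _ => ?_
  rw [← Finset.sum_neg_distrib]
  refine Finset.sum_congr rfl fun k _ => ?_
  rw [Cc_anti U V a b]
  ring

end Aux


section Part2

/-! #### Components of the reflected argument `X` and of `χ(U,V,π·)` -/

lemma PW_comp (S : Submodule ℝ E7) (m n p k : Fin 7) :
    projPerp S (chi7 (e7 m) (e7 n) (e7 p)) k = ∑ q, psiC m n p q * pmat S k q := by
  rw [pm_apply]
  exact Finset.sum_congr rfl fun q _ => by rw [chi7_basis]

lemma sub_apply7 (x y : E7) (t : Fin 7) : (x - y) t = x t - y t := rfl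

lemma X_comp (S : Submodule ℝ E7) (m n p t : Fin 7) :
    (projPerp S (chi7 (e7 m) (e7 n) (e7 p)) - projTan S (chi7 (e7 m) (e7 n) (e7 p))) t
      = 2 * (∑ q, psiC m n p q * pmat S t q) - psiC m n p t := by
  rw [sub_apply7, projTan, sub_apply7, PW_comp, chi7_basis]
  ring

lemma projPerp_X (S : Submodule ℝ E7) (m n p : Fin 7) :
    projPerp S (projPerp S (chi7 (e7 m) (e7 n) (e7 p)) - projTan S (chi7 (e7 m) (e7 n) (e7 p)))
      = projPerp S (chi7 (e7 m) (e7 n) (e7 p)) := by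
  rw [projTan, projPerp_sub, projPerp_sub, projPerp_proj]
  abel

lemma chiPX_comp (S : Submodule ℝ E7) (U V : E7) (m n p t : Fin 7) :
    chi7 U V (projPerp S (projPerp S (chi7 (e7 m) (e7 n) (e7 p))
        - projTan S (chi7 (e7 m) (e7 n) (e7 p)))) t
      = ∑ q, psiC m n p q * Jm S U V q t := by
  rw [projPerp_X, chi_vec]
  calc (∑ k, projPerp S (chi7 (e7 m) (e7 n) (e7 p)) k * Cc U V k t)
      = ∑ k, ∑ q, (psiC m n p q * pmat S k q) * Cc U V k t := by
        refine Finset.sum_congr rfl fun k _ => ?_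
        rw [PW_comp, Finset.sum_mul]
    _ = ∑ q, ∑ k, (psiC m n p q * pmat S k q) * Cc U V k t := Finset.sum_comm
    _ = ∑ q, psiC m n p q * Jm S U V q t := by
        refine Finset.sum_congr rfl fun q _ => ?_
        rw [show Jm S U V q t = ∑ k, pmat S k q * Cc U V k t from rfl, Finset.mul_sum]
        exact Finset.sum_congr rfl fun k _ => by ring

lemma chi_proj_e (S : Submodule ℝ E7) (U V : E7) (m t : Fin 7) :
    chi7 U V (projPerp S (e7 m)) t = Jm S U V m t := by
  rw [chi_vec]
  rfl

lemma innerU_X (S : Submodule ℝ E7) {U : E7} (hU : U ∈ S) (m n p : Fin 7) :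
    ⟪U, projPerp S (chi7 (e7 m) (e7 n) (e7 p)) - projTan S (chi7 (e7 m) (e7 n) (e7 p))⟫
      = -(∑ l, U l * psiC m n p l) := by
  rw [inner_sub_right, projTan, inner_sub_right, inner_projPerp_zero S hU, inner7]
  have hW : (∑ l, U l * chi7 (e7 m) (e7 n) (e7 p) l) = ∑ l, U l * psiC m n p l :=
    Finset.sum_congr rfl fun l _ => by rw [chi7_basis]
  rw [hW]
  ring

lemma inner_chiPe_X (S : Submodule ℝ E7) (U V : E7) (m n p a : Fin 7) :
    ⟪chi7 U V (projPerp S (e7 a)),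
        projPerp S (chi7 (e7 m) (e7 n) (e7 p)) - projTan S (chi7 (e7 m) (e7 n) (e7 p))⟫
      = 2 * (∑ q, psiC m n p q * Lm S U V a q) - ∑ t, Jm S U V a t * psiC m n p t := by
  rw [inner7]
  calc (∑ t, chi7 U V (projPerp S (e7 a)) t
        * (projPerp S (chi7 (e7 m) (e7 n) (e7 p)) - projTan S (chi7 (e7 m) (e7 n) (e7 p))) t)
      = ∑ t, (Jm S U V a t * (2 * (∑ q, psiC m n p q * pmat S t q)) - Jm S U V a t * psiC m n p t) := by
        refine Finset.sum_congr rfl fun t _ => ?_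
        rw [chi_proj_e, X_comp]
        ring
    _ = (∑ t, Jm S U V a t * (2 * (∑ q, psiC m n p q * pmat S t q)))
        - ∑ t, Jm S U V a t * psiC m n p t := Finset.sum_sub_distrib _ _
    _ = (∑ t, ∑ q, 2 * (psiC m n p q * (Jm S U V a t * pmat S t q)))
        - ∑ t, Jm S U V a t * psiC m n p t := by
        congr 1
        refine Finset.sum_congr rfl fun t _ => ?_
        rw [Finset.mul_sum, Finset.mul_sum]
        exact Finset.sum_congr rfl fun q _ => by ring
    _ = (∑ q, ∑ t, 2 * (psiC m n p q * (Jm S U V a t * pmat S t q)))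
        - ∑ t, Jm S U V a t * psiC m n p t := by rw [Finset.sum_comm]
    _ = 2 * (∑ q, psiC m n p q * Lm S U V a q) - ∑ t, Jm S U V a t * psiC m n p t := by
        congr 1
        rw [Finset.mul_sum]
        refine Finset.sum_congr rfl fun q _ => ?_
        rw [show Lm S U V a q = ∑ t, Jm S U V a t * pmat S t q from rfl]
        rw [Finset.mul_sum, Finset.mul_sum]

/-! #### Pointwise evaluation of the four `Nform` terms -/

lemma hN1 (S : Submodule ℝ E7) (U V : E7) (m n p : Fin 7) :
    Nform U V (projPerp S)
        (projPerp S (chi7 (e7 m) (e7 n) (e7 p)) - projTan S (chi7 (e7 m) (e7 n) (e7 p)))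
        (e7 m) (e7 n) (e7 p)
      = (U m * V n - U n * V m) * (∑ q, psiC m n p q * Jm S U V q p)
      + (U n * V p - U p * V n) * (∑ q, psiC m n p q * Jm S U V q m)
      + (U p * V m - U m * V p) * (∑ q, psiC m n p q * Jm S U V q n) := by
  unfold Nform
  simp only [inner_e7r]
  rw [chiPX_comp, chiPX_comp, chiPX_comp]

lemma hN2 (S : Submodule ℝ E7) {U : E7} {V : E7} (hU : U ∈ S) (hV : V ∈ S) (m n p : Fin 7) :
    Nform U V (projPerp S) (e7 m)
        (projPerp S (chi7 (e7 m) (e7 n) (e7 p)) - projTan S (chi7 (e7 m) (e7 n) (e7 p)))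
        (e7 n) (e7 p)
      = ((-(∑ l, U l * psiC m n p l)) * V n - U n * (-(∑ l, V l * psiC m n p l))) * Jm S U V m p
      + (U n * V p - U p * V n)
        * (2 * (∑ q, psiC m n p q * Lm S U V m q) - ∑ t, Jm S U V m t * psiC m n p t)
      + (U p * (-(∑ l, V l * psiC m n p l)) - (-(∑ l, U l * psiC m n p l)) * V p) * Jm S U V m n := by
  unfold Nform
  simp only [inner_e7r]
  rw [innerU_X S hU, innerU_X S hV, inner_chiPe_X, chi_proj_e, chi_proj_e]

lemma hN3 (S : Submodule ℝ E7) {U : E7} {V : E7} (hU : U ∈ S) (hV : V ∈ S) (m n p : Fin 7) :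
    Nform U V (projPerp S) (e7 n)
        (projPerp S (chi7 (e7 m) (e7 n) (e7 p)) - projTan S (chi7 (e7 m) (e7 n) (e7 p)))
        (e7 m) (e7 p)
      = ((-(∑ l, U l * psiC m n p l)) * V m - U m * (-(∑ l, V l * psiC m n p l))) * Jm S U V n p
      + (U m * V p - U p * V m)
        * (2 * (∑ q, psiC m n p q * Lm S U V n q) - ∑ t, Jm S U V n t * psiC m n p t)
      + (U p * (-(∑ l, V l * psiC m n p l)) - (-(∑ l, U l * psiC m n p l)) * V p) * Jm S U V n m := by
  unfold Nform
  simp only [inner_e7r]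
  rw [innerU_X S hU, innerU_X S hV, inner_chiPe_X, chi_proj_e, chi_proj_e]

lemma hN4 (S : Submodule ℝ E7) {U : E7} {V : E7} (hU : U ∈ S) (hV : V ∈ S) (m n p : Fin 7) :
    Nform U V (projPerp S) (e7 p)
        (projPerp S (chi7 (e7 m) (e7 n) (e7 p)) - projTan S (chi7 (e7 m) (e7 n) (e7 p)))
        (e7 m) (e7 n)
      = ((-(∑ l, U l * psiC m n p l)) * V m - U m * (-(∑ l, V l * psiC m n p l))) * Jm S U V p n
      + (U m * V n - U n * V m)
        * (2 * (∑ q, psiC m n p q * Lm S U V p q) - ∑ t, Jm S U V p t * psiC m n p t)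
      + (U n * (-(∑ l, V l * psiC m n p l)) - (-(∑ l, U l * psiC m n p l)) * V n) * Jm S U V p m := by
  unfold Nform
  simp only [inner_e7r]
  rw [innerU_X S hU, innerU_X S hV, inner_chiPe_X, chi_proj_e, chi_proj_e]

end Part2


section Part3

lemma final2 (c : ℝ) (f : Fin 7 → Fin 7 → ℝ) (A : ℝ) (h : (∑ a, ∑ b, f a b) = A)
    (F : Fin 7 → Fin 7 → ℝ) (hF : ∀ a b, F a b = c * f a b) :
    (∑ a, ∑ b, F a b) = c * A := by
  rw [sum2c hF, ← mul_sum2, h]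

lemma final2s (c : ℝ) (f : Fin 7 → Fin 7 → ℝ) (A : ℝ) (h : (∑ a, ∑ b, f a b) = A)
    (F : Fin 7 → Fin 7 → ℝ) (hF : ∀ a b, F a b = c * f b a) :
    (∑ a, ∑ b, F a b) = c * A := by
  calc (∑ a, ∑ b, F a b) = ∑ a, ∑ b, c * f b a := sum2c hF
    _ = ∑ b, ∑ a, c * f b a := sc2 _
    _ = c * ∑ b, ∑ a, f b a := (mul_sum2 _ _).symm
    _ = c * A := by rw [h]

lemma con3n (U V : E7) (n q : Fin 7) :
    (∑ m, ∑ p, (U p * V m - U m * V p) * psiC m n p q) = 2 * Cc U V n q := by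
  calc (∑ m, ∑ p, (U p * V m - U m * V p) * psiC m n p q)
      = ∑ m, ∑ p, -((U m * V p - U p * V m) * psiC m n p q) := sum2c fun m p => by ring
    _ = -∑ m, ∑ p, (U m * V p - U p * V m) * psiC m n p q := by simp [Finset.sum_neg_distrib]
    _ = 2 * Cc U V n q := by rw [con3]; ring

lemma c78n (U V : E7) (m p : Fin 7) :
    (∑ n, ∑ l, (U l * psiC m n p l * V n - U n * (V l * psiC m n p l))) = -(2 * Cc U V p m) := by
  calc (∑ n, ∑ l, (U l * psiC m n p l * V n - U n * (V l * psiC m n p l)))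
      = ∑ n, ∑ l, -((U n * (V l * psiC m n p l) - U l * psiC m n p l * V n)) :=
        sum2c fun n l => by ring
    _ = -∑ n, ∑ l, (U n * (V l * psiC m n p l) - U l * psiC m n p l * V n) := by
        simp [Finset.sum_neg_distrib]
    _ = -(2 * Cc U V p m) := by rw [c78]


lemma p11 (S : Submodule ℝ E7) (U V : E7) :
    (∑ m, ∑ n, ∑ p, (U m * V n - U n * V m) * (∑ q, psiC m n p q * Jm S U V q p))
      = 2 * Y1 S U V := by
  have step1 : ∀ m n p : Fin 7,
      (U m * V n - U n * V m) * (∑ q, psiC m n p q * Jm S U V q p)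
        = ∑ q, ((U m * V n - U n * V m) * psiC m n p q) * Jm S U V q p := by
    intro m n p
    rw [Finset.mul_sum]
    exact Finset.sum_congr rfl fun q _ => by ring
  rw [sum3c step1,
    R1 (fun m n p q => ((U m * V n - U n * V m) * psiC m n p q) * Jm S U V q p)]
  have step2 : ∀ p q : Fin 7,
      (∑ m, ∑ n, ((U m * V n - U n * V m) * psiC m n p q) * Jm S U V q p)
        = (2 * Cc U V p q) * Jm S U V q p := by
    intro p q
    rw [← sum2_mul, con1]
  rw [sum2c step2]
  exact final2 2 (fun a b => Cc U V a b * Jm S U V b a) (Y1 S U V) rfl _ fun a b => by ring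

lemma p12 (S : Submodule ℝ E7) (U V : E7) :
    (∑ m, ∑ n, ∑ p, (U n * V p - U p * V n) * (∑ q, psiC m n p q * Jm S U V q m))
      = 2 * Y1 S U V := by
  have step1 : ∀ m n p : Fin 7,
      (U n * V p - U p * V n) * (∑ q, psiC m n p q * Jm S U V q m)
        = ∑ q, ((U n * V p - U p * V n) * psiC m n p q) * Jm S U V q m := by
    intro m n p
    rw [Finset.mul_sum]
    exact Finset.sum_congr rfl fun q _ => by ring
  rw [sum3c step1,
    R2 (fun m n p q => ((U n * V p - U p * V n) * psiC m n p q) * Jm S U V q m)]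
  have step2 : ∀ m q : Fin 7,
      (∑ n, ∑ p, ((U n * V p - U p * V n) * psiC m n p q) * Jm S U V q m)
        = (2 * Cc U V m q) * Jm S U V q m := by
    intro m q
    rw [← sum2_mul, con2]
  rw [sum2c step2]
  exact final2 2 (fun a b => Cc U V a b * Jm S U V b a) (Y1 S U V) rfl _ fun a b => by ring

lemma p13 (S : Submodule ℝ E7) (U V : E7) :
    (∑ m, ∑ n, ∑ p, (U p * V m - U m * V p) * (∑ q, psiC m n p q * Jm S U V q n))
      = 2 * Y1 S U V := by
  have step1 : ∀ m n p : Fin 7,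
      (U p * V m - U m * V p) * (∑ q, psiC m n p q * Jm S U V q n)
        = ∑ q, ((U p * V m - U m * V p) * psiC m n p q) * Jm S U V q n := by
    intro m n p
    rw [Finset.mul_sum]
    exact Finset.sum_congr rfl fun q _ => by ring
  rw [sum3c step1,
    R3 (fun m n p q => ((U p * V m - U m * V p) * psiC m n p q) * Jm S U V q n)]
  have step2 : ∀ n q : Fin 7,
      (∑ m, ∑ p, ((U p * V m - U m * V p) * psiC m n p q) * Jm S U V q n)
        = (2 * Cc U V n q) * Jm S U V q n := by
    intro n q
    rw [← sum2_mul, con3n]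
  rw [sum2c step2]
  exact final2 2 (fun a b => Cc U V a b * Jm S U V b a) (Y1 S U V) rfl _ fun a b => by ring

lemma p2a (S : Submodule ℝ E7) (U V : E7) :
    (∑ m, ∑ n, ∑ p, ((-(∑ l, U l * psiC m n p l)) * V n - U n * (-(∑ l, V l * psiC m n p l)))
        * Jm S U V m p)
      = 2 * Y1 S U V := by
  have step1 : ∀ m n p : Fin 7,
      ((-(∑ l, U l * psiC m n p l)) * V n - U n * (-(∑ l, V l * psiC m n p l))) * Jm S U V m p
        = ∑ l, (U n * (V l * psiC m n p l) - U l * psiC m n p l * V n) * Jm S U V m p := by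
    intro m n p
    rw [lin2 (V n) (U n) (fun l => U l * psiC m n p l) (fun l => V l * psiC m n p l),
      Finset.sum_mul]
  rw [sum3c step1,
    R4 (fun m n p l => (U n * (V l * psiC m n p l) - U l * psiC m n p l * V n) * Jm S U V m p)]
  have step2 : ∀ m p : Fin 7,
      (∑ n, ∑ l, (U n * (V l * psiC m n p l) - U l * psiC m n p l * V n) * Jm S U V m p)
        = (2 * Cc U V p m) * Jm S U V m p := by
    intro m p
    rw [← sum2_mul, c78]
  rw [sum2c step2]
  exact final2s 2 (fun a b => Cc U V a b * Jm S U V b a) (Y1 S U V) rfl _ fun a b => by ring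

lemma p2b (S : Submodule ℝ E7) (U V : E7) :
    (∑ m, ∑ n, ∑ p, (U n * V p - U p * V n)
        * (2 * (∑ q, psiC m n p q * Lm S U V m q) - ∑ t, Jm S U V m t * psiC m n p t))
      = 4 * Y3 S U V + 2 * Y1 S U V := by
  have split : ∀ m n p : Fin 7, (U n * V p - U p * V n)
        * (2 * (∑ q, psiC m n p q * Lm S U V m q) - ∑ t, Jm S U V m t * psiC m n p t)
      = (U n * V p - U p * V n) * (2 * (∑ q, psiC m n p q * Lm S U V m q))
        - (U n * V p - U p * V n) * (∑ t, Jm S U V m t * psiC m n p t) := by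
    intro m n p; ring
  rw [sum3c split, sum3_sub]
  have h1 : (∑ m, ∑ n, ∑ p, (U n * V p - U p * V n) * (2 * (∑ q, psiC m n p q * Lm S U V m q)))
      = 4 * Y3 S U V := by
    have step1 : ∀ m n p : Fin 7,
        (U n * V p - U p * V n) * (2 * (∑ q, psiC m n p q * Lm S U V m q))
          = ∑ q, ((U n * V p - U p * V n) * psiC m n p q) * (2 * Lm S U V m q) := by
      intro m n p
      rw [Finset.mul_sum, Finset.mul_sum]
      exact Finset.sum_congr rfl fun q _ => by ring
    rw [sum3c step1,
      R2 (fun m n p q => ((U n * V p - U p * V n) * psiC m n p q) * (2 * Lm S U V m q))]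
    have step2 : ∀ m q : Fin 7,
        (∑ n, ∑ p, ((U n * V p - U p * V n) * psiC m n p q) * (2 * Lm S U V m q))
          = (2 * Cc U V m q) * (2 * Lm S U V m q) := by
      intro m q
      rw [← sum2_mul, con2]
    rw [sum2c step2]
    exact final2 4 (fun a b => Cc U V a b * Lm S U V a b) (Y3 S U V) rfl _ fun a b => by ring
  have h2 : (∑ m, ∑ n, ∑ p, (U n * V p - U p * V n) * (∑ t, Jm S U V m t * psiC m n p t))
      = -(2 * Y1 S U V) := by
    have step1 : ∀ m n p : Fin 7,
        (U n * V p - U p * V n) * (∑ t, Jm S U V m t * psiC m n p t)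
          = ∑ t, ((U n * V p - U p * V n) * psiC m n p t) * Jm S U V m t := by
      intro m n p
      rw [Finset.mul_sum]
      exact Finset.sum_congr rfl fun t _ => by ring
    rw [sum3c step1,
      R2 (fun m n p t => ((U n * V p - U p * V n) * psiC m n p t) * Jm S U V m t)]
    have step2 : ∀ m t : Fin 7,
        (∑ n, ∑ p, ((U n * V p - U p * V n) * psiC m n p t) * Jm S U V m t)
          = (2 * Cc U V m t) * Jm S U V m t := by
      intro m t
      rw [← sum2_mul, con2]
    rw [sum2c step2]
    have := final2 2 (fun a b => Cc U V a b * Jm S U V a b) (-Y1 S U V) (Y2_eq S U V)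
      (fun a b => (2 * Cc U V a b) * Jm S U V a b) (fun a b => by ring)
    linear_combination this
  linear_combination h1 - h2

lemma p2c (S : Submodule ℝ E7) (U V : E7) :
    (∑ m, ∑ n, ∑ p, (U p * (-(∑ l, V l * psiC m n p l)) - (-(∑ l, U l * psiC m n p l)) * V p)
        * Jm S U V m n)
      = 2 * Y1 S U V := by
  have step1 : ∀ m n p : Fin 7,
      (U p * (-(∑ l, V l * psiC m n p l)) - (-(∑ l, U l * psiC m n p l)) * V p) * Jm S U V m n
        = ∑ l, (U l * psiC m n p l * V p - U p * (V l * psiC m n p l)) * Jm S U V m n := by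
    intro m n p
    rw [lin2' (U p) (V p) (fun l => U l * psiC m n p l) (fun l => V l * psiC m n p l),
      Finset.sum_mul]
  rw [sum3c step1]
  have step2 : ∀ m n : Fin 7,
      (∑ p, ∑ l, (U l * psiC m n p l * V p - U p * (V l * psiC m n p l)) * Jm S U V m n)
        = (-(2 * Cc U V m n)) * Jm S U V m n := by
    intro m n
    rw [← sum2_mul, c1112]
  rw [sum2c step2]
  have := final2 (-2) (fun a b => Cc U V a b * Jm S U V a b) (-Y1 S U V) (Y2_eq S U V)
    (fun a b => (-(2 * Cc U V a b)) * Jm S U V a b) (fun a b => by ring)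
  linear_combination this

lemma p3a (S : Submodule ℝ E7) (U V : E7) :
    (∑ m, ∑ n, ∑ p, ((-(∑ l, U l * psiC m n p l)) * V m - U m * (-(∑ l, V l * psiC m n p l)))
        * Jm S U V n p)
      = -(2 * Y1 S U V) := by
  have step1 : ∀ m n p : Fin 7,
      ((-(∑ l, U l * psiC m n p l)) * V m - U m * (-(∑ l, V l * psiC m n p l))) * Jm S U V n p
        = ∑ l, (U m * (V l * psiC m n p l) - U l * psiC m n p l * V m) * Jm S U V n p := by
    intro m n p
    rw [lin2 (V m) (U m) (fun l => U l * psiC m n p l) (fun l => V l * psiC m n p l),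
      Finset.sum_mul]
  rw [sum3c step1,
    R6 (fun m n p l => (U m * (V l * psiC m n p l) - U l * psiC m n p l * V m) * Jm S U V n p)]
  have step2 : ∀ n p : Fin 7,
      (∑ m, ∑ l, (U m * (V l * psiC m n p l) - U l * psiC m n p l * V m) * Jm S U V n p)
        = (2 * Cc U V n p) * Jm S U V n p := by
    intro n p
    rw [← sum2_mul, c910]
  rw [sum2c step2]
  have := final2 2 (fun a b => Cc U V a b * Jm S U V a b) (-Y1 S U V) (Y2_eq S U V)
    (fun a b => (2 * Cc U V a b) * Jm S U V a b) (fun a b => by ring)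
  linear_combination this

lemma p3b (S : Submodule ℝ E7) (U V : E7) :
    (∑ m, ∑ n, ∑ p, (U m * V p - U p * V m)
        * (2 * (∑ q, psiC m n p q * Lm S U V n q) - ∑ t, Jm S U V n t * psiC m n p t))
      = -(4 * Y3 S U V) - 2 * Y1 S U V := by
  have split : ∀ m n p : Fin 7, (U m * V p - U p * V m)
        * (2 * (∑ q, psiC m n p q * Lm S U V n q) - ∑ t, Jm S U V n t * psiC m n p t)
      = (U m * V p - U p * V m) * (2 * (∑ q, psiC m n p q * Lm S U V n q))
        - (U m * V p - U p * V m) * (∑ t, Jm S U V n t * psiC m n p t) := by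
    intro m n p; ring
  rw [sum3c split, sum3_sub]
  have h1 : (∑ m, ∑ n, ∑ p, (U m * V p - U p * V m) * (2 * (∑ q, psiC m n p q * Lm S U V n q)))
      = -(4 * Y3 S U V) := by
    have step1 : ∀ m n p : Fin 7,
        (U m * V p - U p * V m) * (2 * (∑ q, psiC m n p q * Lm S U V n q))
          = ∑ q, ((U m * V p - U p * V m) * psiC m n p q) * (2 * Lm S U V n q) := by
      intro m n p
      rw [Finset.mul_sum, Finset.mul_sum]
      exact Finset.sum_congr rfl fun q _ => by ring
    rw [sum3c step1,
      R3 (fun m n p q => ((U m * V p - U p * V m) * psiC m n p q) * (2 * Lm S U V n q))]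
    have step2 : ∀ n q : Fin 7,
        (∑ m, ∑ p, ((U m * V p - U p * V m) * psiC m n p q) * (2 * Lm S U V n q))
          = (-(2 * Cc U V n q)) * (2 * Lm S U V n q) := by
      intro n q
      rw [← sum2_mul, con3]
    rw [sum2c step2]
    have := final2 (-4) (fun a b => Cc U V a b * Lm S U V a b) (Y3 S U V) rfl
      (fun a b => (-(2 * Cc U V a b)) * (2 * Lm S U V a b)) (fun a b => by ring)
    linear_combination this
  have h2 : (∑ m, ∑ n, ∑ p, (U m * V p - U p * V m) * (∑ t, Jm S U V n t * psiC m n p t))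
      = 2 * Y1 S U V := by
    have step1 : ∀ m n p : Fin 7,
        (U m * V p - U p * V m) * (∑ t, Jm S U V n t * psiC m n p t)
          = ∑ t, ((U m * V p - U p * V m) * psiC m n p t) * Jm S U V n t := by
      intro m n p
      rw [Finset.mul_sum]
      exact Finset.sum_congr rfl fun t _ => by ring
    rw [sum3c step1,
      R3 (fun m n p t => ((U m * V p - U p * V m) * psiC m n p t) * Jm S U V n t)]
    have step2 : ∀ n t : Fin 7,
        (∑ m, ∑ p, ((U m * V p - U p * V m) * psiC m n p t) * Jm S U V n t)
          = (-(2 * Cc U V n t)) * Jm S U V n t := by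
      intro n t
      rw [← sum2_mul, con3]
    rw [sum2c step2]
    have := final2 (-2) (fun a b => Cc U V a b * Jm S U V a b) (-Y1 S U V) (Y2_eq S U V)
      (fun a b => (-(2 * Cc U V a b)) * Jm S U V a b) (fun a b => by ring)
    linear_combination this
  linear_combination h1 - h2

lemma p3c (S : Submodule ℝ E7) (U V : E7) :
    (∑ m, ∑ n, ∑ p, (U p * (-(∑ l, V l * psiC m n p l)) - (-(∑ l, U l * psiC m n p l)) * V p)
        * Jm S U V n m)
      = -(2 * Y1 S U V) := by
  have step1 : ∀ m n p : Fin 7,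
      (U p * (-(∑ l, V l * psiC m n p l)) - (-(∑ l, U l * psiC m n p l)) * V p) * Jm S U V n m
        = ∑ l, (U l * psiC m n p l * V p - U p * (V l * psiC m n p l)) * Jm S U V n m := by
    intro m n p
    rw [lin2' (U p) (V p) (fun l => U l * psiC m n p l) (fun l => V l * psiC m n p l),
      Finset.sum_mul]
  rw [sum3c step1]
  have step2 : ∀ m n : Fin 7,
      (∑ p, ∑ l, (U l * psiC m n p l * V p - U p * (V l * psiC m n p l)) * Jm S U V n m)
        = (-(2 * Cc U V m n)) * Jm S U V n m := by
    intro m n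
    rw [← sum2_mul, c1112]
  rw [sum2c step2]
  have := final2 (-2) (fun a b => Cc U V a b * Jm S U V b a) (Y1 S U V) rfl
    (fun a b => (-(2 * Cc U V a b)) * Jm S U V b a) (fun a b => by ring)
  linear_combination this

lemma p4a (S : Submodule ℝ E7) (U V : E7) :
    (∑ m, ∑ n, ∑ p, ((-(∑ l, U l * psiC m n p l)) * V m - U m * (-(∑ l, V l * psiC m n p l)))
        * Jm S U V p n)
      = 2 * Y1 S U V := by
  have step1 : ∀ m n p : Fin 7,
      ((-(∑ l, U l * psiC m n p l)) * V m - U m * (-(∑ l, V l * psiC m n p l))) * Jm S U V p n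
        = ∑ l, (U m * (V l * psiC m n p l) - U l * psiC m n p l * V m) * Jm S U V p n := by
    intro m n p
    rw [lin2 (V m) (U m) (fun l => U l * psiC m n p l) (fun l => V l * psiC m n p l),
      Finset.sum_mul]
  rw [sum3c step1,
    R6 (fun m n p l => (U m * (V l * psiC m n p l) - U l * psiC m n p l * V m) * Jm S U V p n)]
  have step2 : ∀ n p : Fin 7,
      (∑ m, ∑ l, (U m * (V l * psiC m n p l) - U l * psiC m n p l * V m) * Jm S U V p n)
        = (2 * Cc U V n p) * Jm S U V p n := by
    intro n p
    rw [← sum2_mul, c910]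
  rw [sum2c step2]
  exact final2 2 (fun a b => Cc U V a b * Jm S U V b a) (Y1 S U V) rfl _ fun a b => by ring

lemma p4b (S : Submodule ℝ E7) (U V : E7) :
    (∑ m, ∑ n, ∑ p, (U m * V n - U n * V m)
        * (2 * (∑ q, psiC m n p q * Lm S U V p q) - ∑ t, Jm S U V p t * psiC m n p t))
      = 4 * Y3 S U V + 2 * Y1 S U V := by
  have split : ∀ m n p : Fin 7, (U m * V n - U n * V m)
        * (2 * (∑ q, psiC m n p q * Lm S U V p q) - ∑ t, Jm S U V p t * psiC m n p t)
      = (U m * V n - U n * V m) * (2 * (∑ q, psiC m n p q * Lm S U V p q))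
        - (U m * V n - U n * V m) * (∑ t, Jm S U V p t * psiC m n p t) := by
    intro m n p; ring
  rw [sum3c split, sum3_sub]
  have h1 : (∑ m, ∑ n, ∑ p, (U m * V n - U n * V m) * (2 * (∑ q, psiC m n p q * Lm S U V p q)))
      = 4 * Y3 S U V := by
    have step1 : ∀ m n p : Fin 7,
        (U m * V n - U n * V m) * (2 * (∑ q, psiC m n p q * Lm S U V p q))
          = ∑ q, ((U m * V n - U n * V m) * psiC m n p q) * (2 * Lm S U V p q) := by
      intro m n p
      rw [Finset.mul_sum, Finset.mul_sum]
      exact Finset.sum_congr rfl fun q _ => by ring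
    rw [sum3c step1,
      R1 (fun m n p q => ((U m * V n - U n * V m) * psiC m n p q) * (2 * Lm S U V p q))]
    have step2 : ∀ p q : Fin 7,
        (∑ m, ∑ n, ((U m * V n - U n * V m) * psiC m n p q) * (2 * Lm S U V p q))
          = (2 * Cc U V p q) * (2 * Lm S U V p q) := by
      intro p q
      rw [← sum2_mul, con1]
    rw [sum2c step2]
    exact final2 4 (fun a b => Cc U V a b * Lm S U V a b) (Y3 S U V) rfl _ fun a b => by ring
  have h2 : (∑ m, ∑ n, ∑ p, (U m * V n - U n * V m) * (∑ t, Jm S U V p t * psiC m n p t))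
      = -(2 * Y1 S U V) := by
    have step1 : ∀ m n p : Fin 7,
        (U m * V n - U n * V m) * (∑ t, Jm S U V p t * psiC m n p t)
          = ∑ t, ((U m * V n - U n * V m) * psiC m n p t) * Jm S U V p t := by
      intro m n p
      rw [Finset.mul_sum]
      exact Finset.sum_congr rfl fun t _ => by ring
    rw [sum3c step1,
      R1 (fun m n p t => ((U m * V n - U n * V m) * psiC m n p t) * Jm S U V p t)]
    have step2 : ∀ p t : Fin 7,
        (∑ m, ∑ n, ((U m * V n - U n * V m) * psiC m n p t) * Jm S U V p t)
          = (2 * Cc U V p t) * Jm S U V p t := by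
      intro p t
      rw [← sum2_mul, con1]
    rw [sum2c step2]
    have := final2 2 (fun a b => Cc U V a b * Jm S U V a b) (-Y1 S U V) (Y2_eq S U V)
      (fun a b => (2 * Cc U V a b) * Jm S U V a b) (fun a b => by ring)
    linear_combination this
  linear_combination h1 - h2

lemma p4c (S : Submodule ℝ E7) (U V : E7) :
    (∑ m, ∑ n, ∑ p, (U n * (-(∑ l, V l * psiC m n p l)) - (-(∑ l, U l * psiC m n p l)) * V n)
        * Jm S U V p m)
      = 2 * Y1 S U V := by
  have step1 : ∀ m n p : Fin 7,
      (U n * (-(∑ l, V l * psiC m n p l)) - (-(∑ l, U l * psiC m n p l)) * V n) * Jm S U V p m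
        = ∑ l, (U l * psiC m n p l * V n - U n * (V l * psiC m n p l)) * Jm S U V p m := by
    intro m n p
    rw [lin2' (U n) (V n) (fun l => U l * psiC m n p l) (fun l => V l * psiC m n p l),
      Finset.sum_mul]
  rw [sum3c step1,
    R4 (fun m n p l => (U l * psiC m n p l * V n - U n * (V l * psiC m n p l)) * Jm S U V p m)]
  have step2 : ∀ m p : Fin 7,
      (∑ n, ∑ l, (U l * psiC m n p l * V n - U n * (V l * psiC m n p l)) * Jm S U V p m)
        = (-(2 * Cc U V p m)) * Jm S U V p m := by
    intro m p
    rw [← sum2_mul, c78n]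
  rw [sum2c step2]
  have := final2s (-2) (fun a b => Cc U V a b * Jm S U V a b) (-Y1 S U V) (Y2_eq S U V)
    (fun a b => (-(2 * Cc U V b a)) * Jm S U V b a) (fun a b => by ring)
  linear_combination this


end Part3


section Part4

lemma E1_eq (S : Submodule ℝ E7) (U V : E7) :
    (∑ q, ∑ r, ∑ k, (Cc U V k q * Cc U V k r) * pmat S q r) = -Y1 S U V := by
  have h1 : ∀ q r k : Fin 7, (Cc U V k q * Cc U V k r) * pmat S q r
      = -(Cc U V q k * (pmat S q r * Cc U V k r)) := by
    intro q r k; rw [Cc_anti U V k q]; ring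
  rw [sum3c h1]
  rw [show (∑ q, ∑ r, ∑ k, -(Cc U V q k * (pmat S q r * Cc U V k r)))
      = -(∑ q, ∑ r, ∑ k, Cc U V q k * (pmat S q r * Cc U V k r)) from by
    simp [Finset.sum_neg_distrib]]
  rw [neg_inj]
  rw [sc3c (fun q r k => Cc U V q k * (pmat S q r * Cc U V k r))]
  rw [show Y1 S U V = ∑ a, ∑ b, ∑ kk, Cc U V a b * (pmat S kk b * Cc U V kk a) from by
    unfold Y1
    exact sum2c fun a b => by
      rw [show Jm S U V b a = ∑ kk, pmat S kk b * Cc U V kk a from rfl, Finset.mul_sum]]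
  exact sum3c fun k r q => by ring

lemma E2_eq (S : Submodule ℝ E7) (U V : E7) :
    (∑ q, ∑ r, ∑ k, ∑ j, (pmat S k j * (Cc U V k q * Cc U V j r)) * pmat S q r)
      = Y3 S U V := by
  rw [R7 (fun q r k j => (pmat S k j * (Cc U V k q * Cc U V j r)) * pmat S q r)]
  rw [show Y3 S U V
      = ∑ a, ∑ b, ∑ t, ∑ kk, Cc U V a b * ((pmat S kk a * Cc U V kk t) * pmat S t b) from by
    unfold Y3
    refine sum2c fun a b => ?_
    rw [show Lm S U V a b = ∑ t, Jm S U V a t * pmat S t b from rfl, Finset.mul_sum]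
    refine Finset.sum_congr rfl fun t _ => ?_
    rw [show Jm S U V a t = ∑ kk, pmat S kk a * Cc U V kk t from rfl, Finset.sum_mul,
      Finset.mul_sum]]
  exact sum4c fun j r q k => by ring

end Part4

/-- Key algebraic computation in the proof of Theorem 2.19. -/
theorem key_computation_coassoc (S : Submodule ℝ E7) (hS : Module.finrank ℝ S = 4)
    (U V : E7) (hU : U ∈ S) (hV : V ∈ S)
    (g : Fin 4 → E7) (hg : Orthonormal ℝ g) (hgS : ∀ a, g a ∈ S)
    (hspan : Submodule.span ℝ (Set.range g) = S) :
    (1/12 : ℝ) * ∑ m : Fin 7, ∑ n : Fin 7, ∑ p : Fin 7,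
        Dform U V (projPerp S)
          (projPerp S (chi7 (e7 m) (e7 n) (e7 p)) - projTan S (chi7 (e7 m) (e7 n) (e7 p)))
          (e7 m) (e7 n) (e7 p)
      = ∑ a : Fin 4, ‖projPerp S (chi7 U V (g a))‖ ^ 2 := by
  have hT1 : (∑ m : Fin 7, ∑ n : Fin 7, ∑ p : Fin 7,
      Nform U V (projPerp S)
        (projPerp S (chi7 (e7 m) (e7 n) (e7 p)) - projTan S (chi7 (e7 m) (e7 n) (e7 p)))
        (e7 m) (e7 n) (e7 p)) = 6 * Y1 S U V := by
    rw [sum3c (fun m n p => hN1 S U V m n p)]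
    simp only [Finset.sum_add_distrib]
    rw [p11 S U V, p12 S U V, p13 S U V]
    ring
  have hT2 : (∑ m : Fin 7, ∑ n : Fin 7, ∑ p : Fin 7,
      Nform U V (projPerp S) (e7 m)
        (projPerp S (chi7 (e7 m) (e7 n) (e7 p)) - projTan S (chi7 (e7 m) (e7 n) (e7 p)))
        (e7 n) (e7 p)) = 6 * Y1 S U V + 4 * Y3 S U V := by
    rw [sum3c (fun m n p => hN2 S hU hV m n p)]
    simp only [Finset.sum_add_distrib]
    rw [p2a S U V, p2b S U V, p2c S U V]
    ring
  have hT3 : (∑ m : Fin 7, ∑ n : Fin 7, ∑ p : Fin 7,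
      Nform U V (projPerp S) (e7 n)
        (projPerp S (chi7 (e7 m) (e7 n) (e7 p)) - projTan S (chi7 (e7 m) (e7 n) (e7 p)))
        (e7 m) (e7 p)) = -(6 * Y1 S U V) - 4 * Y3 S U V := by
    rw [sum3c (fun m n p => hN3 S hU hV m n p)]
    simp only [Finset.sum_add_distrib]
    rw [p3a S U V, p3b S U V, p3c S U V]
    ring
  have hT4 : (∑ m : Fin 7, ∑ n : Fin 7, ∑ p : Fin 7,
      Nform U V (projPerp S) (e7 p)
        (projPerp S (chi7 (e7 m) (e7 n) (e7 p)) - projTan S (chi7 (e7 m) (e7 n) (e7 p)))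
        (e7 m) (e7 n)) = 6 * Y1 S U V + 4 * Y3 S U V := by
    rw [sum3c (fun m n p => hN4 S hU hV m n p)]
    simp only [Finset.sum_add_distrib]
    rw [p4a S U V, p4b S U V, p4c S U V]
    ring
  have hKey : (∑ m : Fin 7, ∑ n : Fin 7, ∑ p : Fin 7,
      Dform U V (projPerp S)
        (projPerp S (chi7 (e7 m) (e7 n) (e7 p)) - projTan S (chi7 (e7 m) (e7 n) (e7 p)))
        (e7 m) (e7 n) (e7 p)) = -(12 * (Y1 S U V + Y3 S U V)) := by
    have hpt : ∀ m n p : Fin 7,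
        Dform U V (projPerp S)
          (projPerp S (chi7 (e7 m) (e7 n) (e7 p)) - projTan S (chi7 (e7 m) (e7 n) (e7 p)))
          (e7 m) (e7 n) (e7 p)
        = Nform U V (projPerp S)
            (projPerp S (chi7 (e7 m) (e7 n) (e7 p)) - projTan S (chi7 (e7 m) (e7 n) (e7 p)))
            (e7 m) (e7 n) (e7 p)
          - Nform U V (projPerp S) (e7 m)
            (projPerp S (chi7 (e7 m) (e7 n) (e7 p)) - projTan S (chi7 (e7 m) (e7 n) (e7 p)))
            (e7 n) (e7 p)
          + Nform U V (projPerp S) (e7 n)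
            (projPerp S (chi7 (e7 m) (e7 n) (e7 p)) - projTan S (chi7 (e7 m) (e7 n) (e7 p)))
            (e7 m) (e7 p)
          - Nform U V (projPerp S) (e7 p)
            (projPerp S (chi7 (e7 m) (e7 n) (e7 p)) - projTan S (chi7 (e7 m) (e7 n) (e7 p)))
            (e7 m) (e7 n) := fun m n p => rfl
    rw [sum3c hpt]
    simp only [Finset.sum_add_distrib, Finset.sum_sub_distrib]
    rw [hT1, hT2, hT3, hT4]
    ring
  have hRHS : (∑ a : Fin 4, ‖projPerp S (chi7 U V (g a))‖ ^ 2)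
      = -Y1 S U V - Y3 S U V := by
    have hcomp : ∀ a : Fin 4, ‖projPerp S (chi7 U V (g a))‖ ^ 2
        = ∑ l, (∑ q, (∑ k, g a k * Cc U V k q) * pmat S l q)
            * (∑ r, (∑ k, g a k * Cc U V k r) * pmat S l r) := by
      intro a
      rw [← real_inner_self_eq_norm_sq, inner7]
      refine Finset.sum_congr rfl fun l _ => ?_
      have hl : projPerp S (chi7 U V (g a)) l
          = ∑ q, (∑ k, g a k * Cc U V k q) * pmat S l q := by
        rw [pm_apply]
        exact Finset.sum_congr rfl fun q _ => by rw [chi_vec]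
      rw [hl]
    rw [Finset.sum_congr rfl fun a _ => hcomp a]
    have hexp : ∀ (a : Fin 4) (l : Fin 7),
        (∑ q, (∑ k, g a k * Cc U V k q) * pmat S l q)
          * (∑ r, (∑ k, g a k * Cc U V k r) * pmat S l r)
        = ∑ q, ∑ r, ((∑ k, g a k * Cc U V k q) * (∑ k, g a k * Cc U V k r))
            * (pmat S l q * pmat S l r) := by
      intro a l
      rw [Finset.sum_mul_sum]
      exact sum2c fun q r => by ring
    rw [Finset.sum_congr rfl fun a _ => Finset.sum_congr rfl fun l _ => hexp a l]
    rw [R1 (fun (a : Fin 4) (l q r : Fin 7) =>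
      ((∑ k, g a k * Cc U V k q) * (∑ k, g a k * Cc U V k r)) * (pmat S l q * pmat S l r))]
    have hl2 : ∀ (q r : Fin 7) (a : Fin 4),
        (∑ l, ((∑ k, g a k * Cc U V k q) * (∑ k, g a k * Cc U V k r))
            * (pmat S l q * pmat S l r))
          = ((∑ k, g a k * Cc U V k q) * (∑ k, g a k * Cc U V k r)) * pmat S q r := by
      intro q r a
      rw [← Finset.mul_sum, pm_contract]
    rw [Finset.sum_congr rfl fun q _ => Finset.sum_congr rfl fun r _ =>
      Finset.sum_congr rfl fun a _ => hl2 q r a]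
    have hrho : ∀ (q r : Fin 7) (a : Fin 4),
        ((∑ k, g a k * Cc U V k q) * (∑ k, g a k * Cc U V k r)) * pmat S q r
        = ∑ k, ∑ j, ((g a k * g a j) * (Cc U V k q * Cc U V j r)) * pmat S q r := by
      intro q r a
      rw [Finset.sum_mul_sum, sum2_mul]
      exact sum2c fun k j => by ring
    rw [Finset.sum_congr rfl fun q _ => Finset.sum_congr rfl fun r _ =>
      Finset.sum_congr rfl fun a _ => hrho q r a]
    have hswap : ∀ q r : Fin 7,
        (∑ a : Fin 4, ∑ k : Fin 7, ∑ j : Fin 7,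
            ((g a k * g a j) * (Cc U V k q * Cc U V j r)) * pmat S q r)
        = ∑ k, ∑ j, (kd7 j k - pmat S j k) * ((Cc U V k q * Cc U V j r) * pmat S q r) := by
      intro q r
      rw [sc3b (fun (a : Fin 4) (k j : Fin 7) =>
        ((g a k * g a j) * (Cc U V k q * Cc U V j r)) * pmat S q r)]
      refine Finset.sum_congr rfl fun k _ => Finset.sum_congr rfl fun j _ => ?_
      rw [show (∑ a : Fin 4, ((g a k * g a j) * (Cc U V k q * Cc U V j r)) * pmat S q r)
          = (∑ a : Fin 4, g a k * g a j) * ((Cc U V k q * Cc U V j r) * pmat S q r) from by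
        rw [Finset.sum_mul]
        exact Finset.sum_congr rfl fun a _ => by ring]
      rw [gram7 S g hg hgS hspan j k]
    rw [Finset.sum_congr rfl fun q _ => Finset.sum_congr rfl fun r _ => hswap q r]
    have hsplit : ∀ q r : Fin 7,
        (∑ k, ∑ j, (kd7 j k - pmat S j k) * ((Cc U V k q * Cc U V j r) * pmat S q r))
        = (∑ k, (Cc U V k q * Cc U V k r) * pmat S q r)
          - ∑ k, ∑ j, (pmat S k j * (Cc U V k q * Cc U V j r)) * pmat S q r := by
      intro q r
      have hpt : ∀ k j : Fin 7,
          (kd7 j k - pmat S j k) * ((Cc U V k q * Cc U V j r) * pmat S q r)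
          = kd7 j k * ((Cc U V k q * Cc U V j r) * pmat S q r)
            - (pmat S k j * (Cc U V k q * Cc U V j r)) * pmat S q r := by
        intro k j
        rw [pm_symm S k j]
        ring
      rw [sum2c hpt, sum2_sub]
      congr 1
      refine Finset.sum_congr rfl fun k _ => ?_
      rw [show (∑ j, kd7 j k * ((Cc U V k q * Cc U V j r) * pmat S q r))
          = ∑ j, (if j = k then (Cc U V k q * Cc U V j r) * pmat S q r else 0) from
        Finset.sum_congr rfl fun j _ => by by_cases h : j = k <;> simp [kd7, h]]
      simp
    rw [Finset.sum_congr rfl fun q _ => Finset.sum_congr rfl fun r _ => hsplit q r]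
    rw [sum2_sub]
    rw [E1_eq S U V, E2_eq S U V]
  rw [hKey, hRHS]
  ring
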